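/- arXiv:2309.02344 — 5 statements merged into one kernel-verified Lean document; each statement's English description precedes it below -/
import Mathlib

section
/- Let T be a torus, Q a finite group acting on T by continuous automorphisms, and G = T ⋊ Q the corresponding (topological) semidirect product. Then the identity component of the commutator subgroup of G equals the subgroup ⁅Q,T⁆ generated by all commutators ⁅q,t⁆ with q ∈ Q and t ∈ T (where Q and T are regarded as subgroups of G via the canonical inclusions). -/
/-- A topological group is a (topological) torus if it is isomorphic, as a topological group,
to `(ℝ/ℤ)ⁿ` for some `n`. -/
def IsTopologicalTorus (T : Type*) [TopologicalSpace T] [Group T] : Prop :=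
  ∃ (n : ℕ) (e : T ≃* Multiplicative (Fin n → AddCircle (1 : ℝ))),
    Continuous e ∧ Continuous e.symm

/-- The topology on a semidirect product `N ⋊[φ] Q` of topological groups: the one induced
from the product topology via the canonical identification with `N × Q`. -/
instance SemidirectProduct.topologicalSpace {N Q : Type*} [Group N] [TopologicalSpace N]
    [Group Q] [TopologicalSpace Q] (φ : Q →* MulAut N) : TopologicalSpace (N ⋊[φ] Q) :=
  TopologicalSpace.induced (fun g => (g.left, g.right)) inferInstance

open scoped commutatorElement

open SemidirectProduct in
/-- For `G = T ⋊ Q` a semidirect product of a finite (discrete) group `Q` acting continuously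
on a torus `T`, the identity component of the commutator subgroup of `G` equals the subgroup
`⁅Q, T⁆` generated by commutators of elements of `Q` with elements of `T`. -/
theorem identityComponent_commutator_eq_commutator_inr_inl
    {T : Type*} [Group T] [TopologicalSpace T] [IsTopologicalGroup T]
    (hT : IsTopologicalTorus T)
    {Q : Type*} [Group Q] [Finite Q] [TopologicalSpace Q] [DiscreteTopology Q]
    (φ : Q →* MulAut T) (hφ : ∀ q : Q, Continuous (φ q)) :
    Subtype.val '' connectedComponent (1 : commutator (T ⋊[φ] Q)) =
      ((⁅(inr : Q →* T ⋊[φ] Q).range, (inl : T →* T ⋊[φ] Q).range⁆ :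
        Subgroup (T ⋊[φ] Q)) : Set (T ⋊[φ] Q)) := by
  classical
  obtain ⟨n, e, he, he'⟩ := hT
  set G := T ⋊[φ] Q with hG
  -- T is commutative
  have hcm : ∀ a b : T, a * b = b * a := fun a b =>
    e.injective (by rw [map_mul, map_mul, mul_comm])
  letI : CommGroup T := { ‹Group T› with mul_comm := hcm }
  letI : Fintype Q := Fintype.ofFinite Q
  haveI : Fact ((0:ℝ) < 1) := ⟨one_pos⟩
  -- topological facts about T
  let h : T ≃ₜ Multiplicative (Fin n → AddCircle (1 : ℝ)) :=
    { e.toEquiv with continuous_toFun := he, continuous_invFun := he' }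
  haveI : CompactSpace (Multiplicative (Fin n → AddCircle (1:ℝ))) :=
    inferInstanceAs (CompactSpace (Fin n → AddCircle (1:ℝ)))
  haveI : ConnectedSpace (Multiplicative (Fin n → AddCircle (1:ℝ))) :=
    inferInstanceAs (ConnectedSpace (Fin n → AddCircle (1:ℝ)))
  haveI : T2Space T := h.symm.t2Space
  haveI : CompactSpace T := h.symm.compactSpace
  haveI : ConnectedSpace T := h.symm.surjective.connectedSpace h.symm.continuous
  -- topological facts about G
  have hembG : Topology.IsEmbedding (fun g : G => (g.left, g.right)) :=
    ⟨⟨rfl⟩, fun a b hab => by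
      have h1 : a.left = b.left := congrArg Prod.fst hab
      have h2 : a.right = b.right := congrArg Prod.snd hab
      cases a; cases b; cases h1; cases h2; rfl⟩
  haveI : T2Space G := hembG.t2Space
  have hcont_right : Continuous (fun g : G => g.right) :=
    continuous_snd.comp hembG.continuous
  have hcont_inl : Continuous (inl : T → G) :=
    continuous_induced_rng.mpr
      (by exact continuous_id.prodMk continuous_const :
        Continuous fun t : T => ((t : T), (1 : Q)))
  -- the maps t ↦ (φ q t)⁻¹ * t
  let f : Q → T →* T := fun q =>
    { toFun := fun t => (φ q t)⁻¹ * t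
      map_one' := by simp
      map_mul' := fun a b => by
        show (φ q (a * b))⁻¹ * (a * b) = ((φ q a)⁻¹ * a) * ((φ q b)⁻¹ * b)
        rw [map_mul, mul_inv]
        exact mul_mul_mul_comm _ _ _ _ }
  -- the product map
  let F : (Q → T) →* T :=
    { toFun := fun x => ∏ q, f q (x q)
      map_one' := by simp
      map_mul' := fun x y => by
        simp only [Pi.mul_apply, map_mul]
        exact Finset.prod_mul_distrib }
  have hFcont : Continuous F := by
    apply continuous_finset_prod
    intro q _
    exact (((hφ q).comp (continuous_apply q)).inv).mul (continuous_apply q)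
  set S : Subgroup T := F.range with hS
  have hgen : ∀ (q : Q) (t : T), (φ q t)⁻¹ * t ∈ S := by
    intro q t
    refine ⟨Pi.mulSingle q t, ?_⟩
    have hF : ∀ x : Q → T, F x = ∏ r, (φ r (x r))⁻¹ * (x r) := fun x => rfl
    rw [hF, Finset.prod_eq_single q]
    · rw [Pi.mulSingle_eq_same]
    · intro r _ hr
      rw [Pi.mulSingle_eq_of_ne hr]
      simp
    · simp
  have hgen' : ∀ (q : Q) (t : T), t⁻¹ * φ q t ∈ S := by
    intro q t
    have := S.inv_mem (hgen q t)
    rwa [mul_inv, inv_inv, hcm] at this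
  have hgen2 : ∀ (q : Q) (t : T), φ q t * t⁻¹ ∈ S := by
    intro q t
    have h2 := hgen' q t
    rwa [hcm] at h2
  have hSinv : ∀ (q : Q), ∀ s ∈ S, φ q s ∈ S := by
    rintro q s ⟨x, rfl⟩
    show φ q (∏ r, f r (x r)) ∈ S
    rw [map_prod]
    refine Subgroup.prod_mem S fun r _ => ?_
    have : φ q (f r (x r)) = ((φ (q * r) (x r))⁻¹ * x r) * ((x r)⁻¹ * φ q (x r)) := by
      show φ q ((φ r (x r))⁻¹ * x r) = _
      rw [map_mul, map_inv, map_mul φ, MulAut.mul_apply]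
      group
    rw [this]
    exact S.mul_mem (hgen _ _) (hgen' _ _)
  -- the quotient map
  let π : T →* T ⧸ S := QuotientGroup.mk' S
  have hπ : ∀ t : T, π t = 1 ↔ t ∈ S := fun t => QuotientGroup.eq_one_iff t
  have hπφ : ∀ (q : Q) (t : T), π (φ q t) = π t := by
    intro q t
    show (QuotientGroup.mk (φ q t) : T ⧸ S) = QuotientGroup.mk t
    rw [QuotientGroup.eq]
    exact hgen q t
  -- the subgroup M = {g | g.left ∈ S}
  let M : Subgroup G :=
    { carrier := {g : G | g.left ∈ S}
      one_mem' := by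
        show (1 : G).left ∈ S
        exact S.one_mem
      mul_mem' := by
        intro a b ha hb
        show (a * b).left ∈ S
        rw [mul_left]
        exact S.mul_mem ha (hSinv _ _ hb)
      inv_mem' := by
        intro a ha
        show a⁻¹.left ∈ S
        rw [inv_left]
        exact hSinv _ _ (S.inv_mem ha) }
  -- every commutator lies in M
  have hCM : commutator G ≤ M := by
    rw [commutator_def, Subgroup.commutator_le]
    intro g _ k _
    show (⁅g, k⁆).left ∈ S
    rw [← hπ]
    show π (g.left * φ g.right k.left * φ (g.right * k.right) (φ g.right⁻¹ g.left⁻¹) *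
      φ (g.right * k.right * g.right⁻¹) (φ k.right⁻¹ k.left⁻¹)) = 1
    have hπmul : ∀ a b : T, π (a * b) = π a * π b := fun a b => map_mul π a b
    have hπinv : ∀ a : T, π a⁻¹ = (π a)⁻¹ := fun a => map_inv π a
    simp only [hπmul, hπinv, hπφ]
    rw [mul_comm (π g.left) (π k.left)]
    group
  set N : Subgroup G := ⁅(inr : Q →* G).range, (inl : T →* G).range⁆ with hN
  have hcomm_elt : ∀ (q : Q) (t : T), ⁅(inr q : G), inl t⁆ = (inl (φ q t * t⁻¹) : G) := by
    intro q t
    ext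
    · show (⁅(inr q : G), inl t⁆).left = _
      simp [commutatorElement_def, mul_left, inv_left, map_inv]
    · show (⁅(inr q : G), inl t⁆).right = _
      simp [commutatorElement_def, mul_right, inv_right]
  have hNle : N ≤ commutator G := by
    rw [commutator_def]
    exact Subgroup.commutator_mono le_top le_top
  have hNeq : N = S.map inl := by
    apply le_antisymm
    · rw [Subgroup.commutator_le]
      rintro _ ⟨q, rfl⟩ _ ⟨t, rfl⟩
      rw [hcomm_elt]
      exact Subgroup.mem_map_of_mem inl (hgen2 q t)
    · rw [Subgroup.map_le_iff_le_comap]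
      rintro _ ⟨x, rfl⟩
      rw [Subgroup.mem_comap]
      have hFx : (inl (F x) : G) ∈ N := by
        have hF : F x = ∏ r, f r (x r) := rfl
        rw [hF]
        have : ∀ r : Q, f r (x r) ∈ N.comap (inl : T →* G) := by
          intro r
          rw [Subgroup.mem_comap]
          have h1 : (inl (φ r (x r) * (x r)⁻¹) : G) ∈ N := by
            rw [← hcomm_elt]
            exact Subgroup.commutator_mem_commutator ⟨r, rfl⟩ ⟨x r, rfl⟩
          have h2 : (inl (f r (x r)) : G) = (inl (φ r (x r) * (x r)⁻¹) : G)⁻¹ := by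
            rw [← map_inv]
            congr 1
            show (φ r (x r))⁻¹ * x r = (φ r (x r) * (x r)⁻¹)⁻¹
            rw [mul_inv, inv_inv, hcm]
          rw [h2]
          exact N.inv_mem h1
        exact Subgroup.prod_mem _ fun r _ => this r
      exact hFx
  -- N as a set
  have hNset : (N : Set G) = Set.range ((inl : T → G) ∘ F) := by
    rw [hNeq]
    rw [Subgroup.coe_map, MonoidHom.coe_range, Set.range_comp]
  have hNcompact : IsCompact (N : Set G) := by
    rw [hNset]
    exact isCompact_range (hcont_inl.comp hFcont)
  have hNconn : IsConnected (N : Set G) := by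
    rw [hNset]
    exact isConnected_range (hcont_inl.comp hFcont)
  -- key set identity
  have hright_one : ∀ g : G, g ∈ commutator G → g.right = 1 → g ∈ N := by
    intro g hg hr
    have hl : g.left ∈ S := hCM hg
    have : g = inl g.left := by
      ext
      · rfl
      · show g.right = (inl g.left : G).right
        rw [hr]; rfl
    rw [this, hNeq]
    exact Subgroup.mem_map_of_mem inl hl
  have hNright : ∀ g : G, g ∈ N → g.right = 1 := by
    intro g hg
    rw [hNeq] at hg
    obtain ⟨t, _, rfl⟩ := hg
    rfl
  -- now work in the subtype
  set C := commutator G with hC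
  set D : Set C := Subtype.val ⁻¹' (N : Set G) with hD
  have hvalD : Subtype.val '' D = (N : Set G) := by
    rw [hD, Set.image_preimage_eq_inter_range, Subtype.range_val]
    exact Set.inter_eq_left.mpr hNle
  have h1D : (1 : C) ∈ D := by
    show (1 : G) ∈ N
    exact N.one_mem
  have hDopen : IsOpen D := by
    have : D = (fun x : C => (x : G).right) ⁻¹' {1} := by
      ext x
      constructor
      · intro hx
        exact hNright _ hx
      · intro hx
        exact hright_one _ x.2 hx
    rw [this]
    exact (isOpen_discrete {1}).preimage (hcont_right.comp continuous_subtype_val)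
  have hDclosed : IsClosed D :=
    (hNcompact.isClosed).preimage continuous_subtype_val
  have hDconn : IsPreconnected D := by
    have hind : Topology.IsInducing ((↑) : C → G) := Topology.IsInducing.subtypeVal
    exact hind.isPreconnected_image.mp (by rw [show Subtype.val '' D = (N : Set G) from hvalD]; exact hNconn.isPreconnected)
  have hcc : connectedComponent (1 : C) = D := by
    apply le_antisymm
    · exact IsClopen.connectedComponent_subset ⟨hDclosed, hDopen⟩ h1D
    · exact hDconn.subset_connectedComponent h1D
  rw [hcc, hvalD]
end

section
/- Let N be an abelian group, Q a group acting on N by automorphisms, and G = N ⋊ Q the semidirect product. Then the commutator subgroup of G equals the set product [Q,Q]·⁅Q,N⁆; that is, every element of [G,G] can be written as r·x with r ∈ [Q,Q] and x ∈ ⁅Q,N⁆, where [Q,Q] is the commutator subgroup of Q (viewed inside G) and ⁅Q,N⁆ is the subgroup of G generated by all commutators ⁅q,n⁆ with q ∈ Q and n ∈ N. -/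
open scoped commutatorElement

private theorem comm_center_left {G : Type*} [Group G] {z x y : G}
    (hz : z ∈ Subgroup.center G) : ⁅z * x, y⁆ = ⁅x, y⁆ := by
  rw [commutatorElement_def, commutatorElement_def, mul_inv_rev]
  have h1 := (Subgroup.mem_center_iff.mp hz)
  calc z * x * y * (x⁻¹ * z⁻¹) * y⁻¹
      = z * (x * y * x⁻¹) * z⁻¹ * y⁻¹ := by group
    _ = (x * y * x⁻¹) * z * z⁻¹ * y⁻¹ := by rw [h1 (x * y * x⁻¹)]
    _ = x * y * x⁻¹ * y⁻¹ := by group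

private theorem comm_center_right {G : Type*} [Group G] {z x y : G}
    (hz : z ∈ Subgroup.center G) : ⁅x, z * y⁆ = ⁅x, y⁆ := by
  rw [← commutatorElement_inv, comm_center_left hz, commutatorElement_inv]

open SemidirectProduct in
/-- For a semidirect product `G = N ⋊ Q` with `N` abelian, the commutator subgroup of `G`
equals the set product `[Q,Q]·⁅Q,N⁆`: every element of `[G,G]` is `r * x` with
`r ∈ [Q,Q]` and `x ∈ ⁅Q,N⁆`. -/
theorem commutator_semidirectProduct_eq_mul
    {N Q : Type*} [CommGroup N] [Group Q] (φ : Q →* MulAut N)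
    (x : N ⋊[φ] Q) (hx : x ∈ commutator (N ⋊[φ] Q)) :
    ∃ r ∈ (⁅(inr : Q →* N ⋊[φ] Q).range, (inr : Q →* N ⋊[φ] Q).range⁆ :
        Subgroup (N ⋊[φ] Q)),
      ∃ y ∈ (⁅(inr : Q →* N ⋊[φ] Q).range, (inl : N →* N ⋊[φ] Q).range⁆ :
        Subgroup (N ⋊[φ] Q)),
        x = r * y := by
  set R : Subgroup (N ⋊[φ] Q) := (inr : Q →* N ⋊[φ] Q).range with hR
  set Nsub : Subgroup (N ⋊[φ] Q) := (inl : N →* N ⋊[φ] Q).range with hNs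
  haveI hNn : Nsub.Normal := by
    rw [hNs, range_inl_eq_ker_rightHom]; infer_instance
  set K : Subgroup (N ⋊[φ] Q) := ⁅R, Nsub⁆ with hK
  -- every commutator ⁅g, inl m⁆ equals ⁅inr g.right, inl m⁆
  have hcomm : ∀ (g : N ⋊[φ] Q) (m : N),
      ⁅g, (inl m : N ⋊[φ] Q)⁆ = ⁅(inr g.right : N ⋊[φ] Q), (inl m : N ⋊[φ] Q)⁆ := by
    intro g m
    ext
    · simp [commutatorElement_def, mul_comm, mul_left_comm, mul_assoc]
      rw [mul_left_comm, mul_inv_cancel_left]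
    · simp [commutatorElement_def]
  have hKtop : K = ⁅(⊤ : Subgroup (N ⋊[φ] Q)), Nsub⁆ := by
    refine le_antisymm (Subgroup.commutator_mono le_top le_rfl) ?_
    rw [Subgroup.commutator_le]
    rintro g - n ⟨m, rfl⟩
    rw [hcomm g m]
    exact Subgroup.commutator_mem_commutator ⟨g.right, rfl⟩ ⟨m, rfl⟩
  haveI hKn : K.Normal := by
    rw [hKtop]; infer_instance
  have hcent : ∀ a : N,
      (QuotientGroup.mk' K) (inl a) ∈ Subgroup.center ((N ⋊[φ] Q) ⧸ K) := by
    intro a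
    rw [Subgroup.mem_center_iff]
    intro z
    obtain ⟨g, rfl⟩ := QuotientGroup.mk'_surjective K z
    rw [← inl_left_mul_inr_right g, map_mul]
    have h1 : Commute ((QuotientGroup.mk' K) (inl g.left)) ((QuotientGroup.mk' K) (inl a)) := by
      rw [commute_iff_eq, ← map_mul, ← map_mul, ← map_mul, ← map_mul, mul_comm]
    have h2 : Commute ((QuotientGroup.mk' K) (inr g.right)) ((QuotientGroup.mk' K) (inl a)) := by
      rw [← commutatorElement_eq_one_iff_commute, ← map_commutatorElement,
        ← MonoidHom.mem_ker, QuotientGroup.ker_mk']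
      exact Subgroup.commutator_mem_commutator ⟨g.right, rfl⟩ ⟨a, rfl⟩
    exact h1.mul_left h2
  -- commutator ≤ ⁅R,R⁆ ⊔ K
  have hle : commutator (N ⋊[φ] Q) ≤ ⁅R, R⁆ ⊔ K := by
    rw [commutator_def, Subgroup.commutator_le]
    intro g _ h _
    have key : (QuotientGroup.mk' K) ⁅g, h⁆ =
        (QuotientGroup.mk' K) ⁅(inr g.right : N ⋊[φ] Q), (inr h.right : N ⋊[φ] Q)⁆ := by
      rw [map_commutatorElement, map_commutatorElement]
      conv_lhs => rw [← inl_left_mul_inr_right g, ← inl_left_mul_inr_right h]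
      rw [map_mul, map_mul, comm_center_left (hcent g.left),
        comm_center_right (hcent h.left)]
    have hk : ⁅(inr g.right : N ⋊[φ] Q), (inr h.right : N ⋊[φ] Q)⁆⁻¹ * ⁅g, h⁆ ∈ K := by
      exact (QuotientGroup.eq (s := K)).mp key.symm
    have heq : ⁅g, h⁆ = ⁅(inr g.right : N ⋊[φ] Q), (inr h.right : N ⋊[φ] Q)⁆ *
        (⁅(inr g.right : N ⋊[φ] Q), (inr h.right : N ⋊[φ] Q)⁆⁻¹ * ⁅g, h⁆) := by
      rw [← mul_assoc, mul_inv_cancel, one_mul]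
    rw [heq]
    exact Subgroup.mul_mem _
      (Subgroup.mem_sup_left
        (Subgroup.commutator_mem_commutator ⟨g.right, rfl⟩ ⟨h.right, rfl⟩))
      (Subgroup.mem_sup_right hk)
  have hx' : x ∈ (↑(⁅R, R⁆ ⊔ K) : Set (N ⋊[φ] Q)) := hle hx
  rw [Subgroup.mul_normal] at hx'
  obtain ⟨r, hr, y, hy, rfl⟩ := hx'
  exact ⟨r, hr, y, hy, rfl⟩
end

section
/- Let T be a torus, Q a finite group acting on T by continuous automorphisms, and G = T ⋊ Q. Then every element of the identity component of the commutator subgroup of G can be written as a product of |Q| commutators of the form ⁅q₁,t₁⁆⋯⁅q_{|Q|},t_{|Q|}⁆ with qᵢ ∈ Q and tᵢ ∈ T. -/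
open SemidirectProduct in
/-- In `G = T ⋊ Q` with `T` a torus and `Q` finite acting continuously, every element of the
identity component of the commutator subgroup of `G` is a product of `|Q|` commutators
`⁅q₁,t₁⁆⋯⁅q_{|Q|},t_{|Q|}⁆` with `qᵢ ∈ Q`, `tᵢ ∈ T`.  (Here `⁅g,h⁆ = g⁻¹h⁻¹gh`.) -/
theorem mem_identityComponent_commutator_eq_prod_card_commutators
    {T : Type*} [Group T] [TopologicalSpace T] [IsTopologicalGroup T]
    (hT : IsTopologicalTorus T)
    {Q : Type*} [Group Q] [Fintype Q] [TopologicalSpace Q] [DiscreteTopology Q]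
    (φ : Q →* MulAut T) (hφ : ∀ q : Q, Continuous (φ q))
    (x : T ⋊[φ] Q) (hx : x ∈ commutator (T ⋊[φ] Q))
    (hx0 : (⟨x, hx⟩ : commutator (T ⋊[φ] Q)) ∈ connectedComponent 1) :
    ∃ (qs : Fin (Fintype.card Q) → Q) (ts : Fin (Fintype.card Q) → T),
      x = (List.ofFn fun i =>
        ((inr (qs i) : T ⋊[φ] Q)⁻¹ * (inl (ts i))⁻¹ * inr (qs i) * inl (ts i))).prod := by
  classical
  -- T is commutative
  obtain ⟨n, e, -, -⟩ := hT
  have hcomm : ∀ a b : T, a * b = b * a := fun a b => e.injective (by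
    rw [map_mul, map_mul, mul_comm])
  letI : CommGroup T := { (inferInstance : Group T) with mul_comm := hcomm }
  -- step 1: x.right = 1
  have hright : x.right = 1 := by
    have hcont : Continuous (fun g : T ⋊[φ] Q => g.right) := by
      have h0 : Continuous (fun g : T ⋊[φ] Q => (g.left, g.right)) := continuous_induced_dom
      exact continuous_snd.comp h0
    have hc2 : Continuous (fun g : commutator (T ⋊[φ] Q) => (g : T ⋊[φ] Q).right) :=
      hcont.comp continuous_subtype_val
    have hmem : x.right ∈ connectedComponent ((1 : commutator (T ⋊[φ] Q)) : T ⋊[φ] Q).right :=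
      hc2.image_connectedComponent_subset 1 ⟨⟨x, hx⟩, hx0, rfl⟩
    simpa using hmem
  -- the endomorphisms f q : t ↦ (φ q⁻¹ t)⁻¹ * t
  set f : Q → T →* T := fun q => MonoidHom.mk' (fun t => (φ q⁻¹ t)⁻¹ * t) (by
    intro a b
    simp only [map_mul, mul_inv]
    exact mul_mul_mul_comm _ _ _ _) with hf
  -- the big product homomorphism
  set F : (Q → T) →* T := MonoidHom.mk' (fun t => ∏ q, f q (t q)) (by
    intro a b
    simp [Finset.prod_mul_distrib]) with hF
  set S : Subgroup T := F.range with hS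
  have hfS : ∀ (q : Q) (s : T), f q s ∈ S := by
    intro q s
    refine ⟨Pi.mulSingle q s, ?_⟩
    show ∏ r, f r ((Pi.mulSingle q s : Q → T) r) = f q s
    rw [Fintype.prod_eq_single q (fun r hr => by simp [Pi.mulSingle_eq_of_ne hr])]
    simp
  -- the homomorphism G → T⧸S, g ↦ g.left
  have hφS : ∀ (q : Q) (s : T), (QuotientGroup.mk (φ q s) : T ⧸ S) = QuotientGroup.mk s := by
    intro q s
    rw [QuotientGroup.eq]
    have := hfS q⁻¹ s
    simpa [hf] using this
  set ψ : (T ⋊[φ] Q) →* T ⧸ S := MonoidHom.mk' (fun g => QuotientGroup.mk g.left) (by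
    intro a b
    show (QuotientGroup.mk (a.left * φ a.right b.left) : T ⧸ S) = _
    rw [QuotientGroup.mk_mul, hφS]) with hψ
  have hxS : x.left ∈ S := by
    have := Abelianization.commutator_subset_ker ψ hx
    rwa [MonoidHom.mem_ker, hψ, MonoidHom.mk'_apply, QuotientGroup.eq_one_iff] at this
  obtain ⟨t, ht⟩ := hxS
  -- assemble
  set eq : Fin (Fintype.card Q) ≃ Q := (Fintype.equivFin Q).symm with heq
  refine ⟨fun i => eq i, fun i => t (eq i), ?_⟩
  have hterm : ∀ (q : Q) (s : T),
      (inr q : T ⋊[φ] Q)⁻¹ * (inl s)⁻¹ * inr q * inl s = inl (f q s) := by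
    intro q s
    ext <;> simp [hf]
  have hlist : (List.ofFn fun i =>
      ((inr (eq i) : T ⋊[φ] Q)⁻¹ * (inl (t (eq i)))⁻¹ * inr (eq i) * inl (t (eq i))))
      = List.map inl (List.ofFn fun i => f (eq i) (t (eq i))) := by
    rw [List.map_ofFn]
    congr 1
    funext i
    exact hterm (eq i) (t (eq i))
  have ht' : ∏ q, f q (t q) = x.left := ht
  rw [hlist, ← map_list_prod, List.prod_ofFn, Equiv.prod_comp eq (fun q => f q (t q)), ht']
  ext
  · rfl
  · exact hright
end

section
/- Let T be a torus, Q a finite group acting on T by continuous automorphisms, and G = T ⋊ Q. Let n = |Q| and let P denote the set of products ⁅q₁,t₁⁆⋯⁅qₙ,tₙ⁆ with qᵢ ∈ Q, tᵢ ∈ T, and with t₁, …, t_{n−1} elements of finite order in T. Then P is a dense subset of the identity component of the commutator subgroup of G. -/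
open SemidirectProduct
open scoped commutatorElement

namespace TorusCommAux

variable {T : Type*} [CommGroup T] {Q : Type*} [Group Q] (φ : Q →* MulAut T)

/-- `t ↦ φ q⁻¹ t⁻¹ * t`, as a monoid hom. -/
def d (q : Q) : T →* T :=
  MonoidHom.mk' (fun t => φ q⁻¹ t⁻¹ * t) (by
    intro a b
    simp only [mul_inv, map_mul]
    simp [mul_comm, mul_left_comm, mul_assoc])

@[simp] lemma d_apply (q : Q) (t : T) : d φ q t = φ q⁻¹ t⁻¹ * t := rfl

/-- the basic commutator `q⁻¹ t⁻¹ q t` equals `inl (d q t)` -/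
lemma raw_comm_eq (q : Q) (t : T) :
    (inr q : T ⋊[φ] Q)⁻¹ * (inl t)⁻¹ * inr q * inl t = inl (d φ q t) := by
  ext
  · simp
  · simp

lemma raw_comm_eq' (q : Q) (t : T) :
    (inr q : T ⋊[φ] Q)⁻¹ * (inl t)⁻¹ * inr q * inl t = ⁅(inr q : T ⋊[φ] Q)⁻¹, (inl t)⁻¹⁆ := by
  rw [commutatorElement_def]; group

lemma comm_inl_any (a : T) (h : T ⋊[φ] Q) :
    ⁅(inl a : T ⋊[φ] Q), h⁆ = inl (d φ h.right⁻¹ a) := by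
  ext
  · simp only [commutatorElement_def, mul_left, mul_right, inv_left, inv_right, left_inl,
      right_inl, map_mul, map_inv, mul_inv, mul_one, one_mul, map_one, d_apply, inv_inv]
    simp [mul_comm, mul_left_comm, mul_assoc]
  · simp [commutatorElement_def]

lemma comm_inr_inr (q r : Q) :
    ⁅(inr q : T ⋊[φ] Q), (inr r : T ⋊[φ] Q)⁆ = inr ⁅q, r⁆ :=
  (map_commutatorElement (inr : Q →* T ⋊[φ] Q) q r).symm

lemma conj_inl_d (g : T ⋊[φ] Q) (q : Q) (t : T) :
    g * inl (d φ q t) * g⁻¹ = inl (d φ (g.right * q * g.right⁻¹) (φ g.right t)) := by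
  ext
  · simp only [mul_left, mul_right, inv_left, inv_right, left_inl, right_inl, d_apply,
      map_mul, map_inv, mul_inv, mul_one, one_mul, map_one, inv_inv, mul_inv_rev]
    simp only [← MulAut.mul_apply, ← map_mul]
    simp [mul_comm, mul_left_comm, mul_assoc, mul_inv, map_mul]
  · simp

end TorusCommAux
namespace TorusCommAux

variable {T : Type*} [CommGroup T] {Q : Type*} [Group Q] (φ : Q →* MulAut T)

variable [Fintype Q]

/-- the product homomorphism `(Fin k → T) →* T`, `ts ↦ ∏ i, d (qs i) (ts i)`. -/
def Psi {k : ℕ} (qs : Fin k → Q) : (Fin k → T) →* T :=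
  MonoidHom.mk' (fun ts => ∏ i, d φ (qs i) (ts i)) (by
    intro a b
    simp only [Pi.mul_apply, map_mul, ← Finset.prod_mul_distrib])

@[simp] lemma Psi_apply {k : ℕ} (qs : Fin k → Q) (ts : Fin k → T) :
    Psi φ qs ts = ∏ i, d φ (qs i) (ts i) := rfl

/-- the subgroup `V = ∑_q Im (1 - φ q)`, realized as the range of `inl ∘ Psi` over an
enumeration of `Q`. -/
noncomputable def Smax : Subgroup (T ⋊[φ] Q) :=
  ((inl : T →* T ⋊[φ] Q).comp (Psi φ (fun i => (Fintype.equivFin Q).symm i))).range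

lemma inl_d_mem_Smax (q : Q) (t : T) : inl (d φ q t) ∈ Smax φ := by
  refine ⟨Function.update (1 : Fin (Fintype.card Q) → T) ((Fintype.equivFin Q) q) t, ?_⟩
  simp only [MonoidHom.comp_apply, Psi_apply]
  congr 1
  rw [Fintype.prod_eq_single ((Fintype.equivFin Q) q)]
  · simp
  · intro j hj
    rw [Function.update_of_ne hj]
    simp

lemma inl_Psi_eq {k : ℕ} (qs : Fin k → Q) (ts : Fin k → T) :
    (inl (Psi φ qs ts) : T ⋊[φ] Q) = (List.ofFn fun i => inl (d φ (qs i) (ts i))).prod := by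
  rw [Psi_apply, ← Fin.prod_ofFn, map_list_prod, List.map_ofFn]
  rfl

lemma mem_Smax_iff (x : T ⋊[φ] Q) :
    x ∈ Smax φ ↔ ∃ ts : Fin (Fintype.card Q) → T,
      x = inl (Psi φ (fun i => (Fintype.equivFin Q).symm i) ts) := by
  constructor
  · rintro ⟨ts, rfl⟩; exact ⟨ts, rfl⟩
  · rintro ⟨ts, rfl⟩; exact ⟨ts, rfl⟩


instance Smax_normal : (Smax φ).Normal := by
  constructor
  intro x hx g
  rw [mem_Smax_iff] at hx
  obtain ⟨ts, rfl⟩ := hx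
  rw [inl_Psi_eq]
  have h1 : g * (List.ofFn fun i =>
        (inl (d φ ((Fintype.equivFin Q).symm i) (ts i)) : T ⋊[φ] Q)).prod * g⁻¹
      = ((List.ofFn fun i =>
        (inl (d φ ((Fintype.equivFin Q).symm i) (ts i)) : T ⋊[φ] Q)).map
          (MulAut.conj g)).prod := by
    rw [← map_list_prod]
    simp [MulAut.conj_apply]
  rw [h1]
  refine Subgroup.list_prod_mem _ ?_
  intro x hx
  rw [List.mem_map] at hx
  obtain ⟨y, hy, rfl⟩ := hx
  rw [List.mem_ofFn] at hy
  obtain ⟨i, rfl⟩ := hy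
  rw [MulAut.conj_apply, conj_inl_d]
  exact inl_d_mem_Smax φ _ _

/-- the normal closure of the basic commutators -/
noncomputable def NN : Subgroup (T ⋊[φ] Q) :=
  Subgroup.normalClosure {x : T ⋊[φ] Q | ∃ q t, x = inl (d φ q t)}

instance NN_normal : (NN φ).Normal := Subgroup.normalClosure_normal

lemma inl_d_mem_NN (q : Q) (t : T) : (inl (d φ q t) : T ⋊[φ] Q) ∈ NN φ :=
  Subgroup.subset_normalClosure ⟨q, t, rfl⟩

lemma NN_le_Smax : NN φ ≤ Smax φ :=
  Subgroup.normalClosure_le_normal (by rintro x ⟨q, t, rfl⟩; exact inl_d_mem_Smax φ q t)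

lemma NN_le_inl_range : NN φ ≤ (inl : T →* T ⋊[φ] Q).range := by
  have : ((inl : T →* T ⋊[φ] Q).range).Normal := by
    rw [range_inl_eq_ker_rightHom]; infer_instance
  exact Subgroup.normalClosure_le_normal (by rintro x ⟨q, t, rfl⟩; exact ⟨_, rfl⟩)

lemma comm_inl_mem_NN (a : T) (x : T ⋊[φ] Q) : ⁅(inl a : T ⋊[φ] Q), x⁆ ∈ NN φ := by
  rw [comm_inl_any]; exact inl_d_mem_NN φ _ _

lemma commutator_le_NN_sup :
    commutator (T ⋊[φ] Q) ≤ NN φ ⊔ (inr : Q →* T ⋊[φ] Q).range := by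
  rw [commutator_def, Subgroup.commutator_le]
  intro g _ h _
  set M := NN φ ⊔ (inr : Q →* T ⋊[φ] Q).range with hM
  have hNM : NN φ ≤ M := le_sup_left
  -- w := ⁅inr g.right, h⁆ ∈ M
  have hw : ⁅(inr g.right : T ⋊[φ] Q), h⁆ ∈ M := by
    have hh : h = inl h.left * inr h.right := (inl_left_mul_inr_right h).symm
    have id2 : ⁅(inr g.right : T ⋊[φ] Q), (inl h.left * inr h.right : T ⋊[φ] Q)⁆
        = ⁅(inr g.right : T ⋊[φ] Q), (inl h.left : T ⋊[φ] Q)⁆ *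
          (inl h.left * ⁅(inr g.right : T ⋊[φ] Q), inr h.right⁆ * (inl h.left)⁻¹) := by
      simp only [commutatorElement_def]; group
    rw [hh, id2]
    refine mul_mem (hNM ?_) ?_
    · have : ⁅(inr g.right : T ⋊[φ] Q), (inl h.left : T ⋊[φ] Q)⁆
          = ⁅(inl h.left : T ⋊[φ] Q), (inr g.right : T ⋊[φ] Q)⁆⁻¹ := by
        rw [commutatorElement_inv]
      rw [this]
      exact inv_mem (comm_inl_mem_NN φ _ _)
    · rw [comm_inr_inr]
      have key : inl h.left * (inr ⁅g.right, h.right⁆ : T ⋊[φ] Q) * (inl h.left)⁻¹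
          = ⁅(inl h.left : T ⋊[φ] Q), (inr ⁅g.right, h.right⁆ : T ⋊[φ] Q)⁆ * inr ⁅g.right, h.right⁆ := by
        simp only [commutatorElement_def]; group
      rw [key]
      exact mul_mem (hNM (comm_inl_mem_NN φ _ _)) ((le_sup_right : (inr : Q →* T ⋊[φ] Q).range ≤ _) ⟨⁅g.right, h.right⁆, rfl⟩)
  have hg : g = inl g.left * inr g.right := (inl_left_mul_inr_right g).symm
  have id1 : ∀ z : T ⋊[φ] Q, ⁅(inl g.left * inr g.right : T ⋊[φ] Q), z⁆
      = (inl g.left * ⁅(inr g.right : T ⋊[φ] Q), z⁆ * (inl g.left)⁻¹) *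
        ⁅(inl g.left : T ⋊[φ] Q), z⁆ := by
    intro z; simp only [commutatorElement_def]; group
  rw [show (⁅g, h⁆ : T ⋊[φ] Q) = ⁅(inl g.left * inr g.right : T ⋊[φ] Q), h⁆ by rw [← hg], id1]
  refine mul_mem ?_ (hNM (comm_inl_mem_NN φ _ _))
  have key2 : inl g.left * ⁅(inr g.right : T ⋊[φ] Q), h⁆ * (inl g.left)⁻¹
      = ⁅(inl g.left : T ⋊[φ] Q), ⁅(inr g.right : T ⋊[φ] Q), h⁆⁆ *
        ⁅(inr g.right : T ⋊[φ] Q), h⁆ := by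
    simp only [commutatorElement_def]; group
  rw [key2]
  exact mul_mem (hNM (comm_inl_mem_NN φ _ _)) hw

open scoped Pointwise in
lemma mem_NN_of_right_one {x : T ⋊[φ] Q} (hx : x ∈ commutator (T ⋊[φ] Q))
    (hr : x.right = 1) : x ∈ NN φ := by
  have h1 := commutator_le_NN_sup φ hx
  rw [← SetLike.mem_coe, Subgroup.normal_mul] at h1
  obtain ⟨a, ha, b, ⟨c, rfl⟩, rfl⟩ := h1
  have har : a.right = 1 := by
    obtain ⟨t, rfl⟩ := NN_le_inl_range φ ha
    simp
  have : c = 1 := by simpa [har] using hr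
  simpa [this] using ha

end TorusCommAux


namespace TorusTopAux

open SemidirectProduct

lemma dense_finAddOrder_addCircle : Dense {u : AddCircle (1 : ℝ) | IsOfFinAddOrder u} := by
  have h1 : DenseRange (fun q : ℚ => ((q : ℝ) : AddCircle (1 : ℝ))) := by
    have h2 : DenseRange ((↑) : ℝ → AddCircle (1 : ℝ)) :=
      Function.Surjective.denseRange (fun x => QuotientAddGroup.induction_on x fun r => ⟨r, rfl⟩)
    exact h2.comp Rat.denseRange_cast (AddCircle.continuous_mk' 1)
  refine Dense.mono ?_ h1
  rintro x ⟨q, rfl⟩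
  have : addOrderOf ((q : ℝ) : AddCircle (1 : ℝ)) = q.den := by
    simpa using AddCircle.addOrderOf_coe_rat (p := (1:ℝ)) (q := q)
  rw [Set.mem_setOf_eq, ← addOrderOf_pos_iff, this]
  exact q.pos

lemma isOfFinAddOrder_pi {ι : Type*} [Fintype ι] {M : ι → Type*} [∀ i, AddMonoid (M i)]
    {f : ∀ i, M i} (hf : ∀ i, IsOfFinAddOrder (f i)) : IsOfFinAddOrder f := by
  rw [isOfFinAddOrder_iff_nsmul_eq_zero]
  refine ⟨∏ i, addOrderOf (f i), Finset.prod_pos fun i _ => addOrderOf_pos_iff.2 (hf i), ?_⟩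
  funext i
  have : addOrderOf (f i) ∣ ∏ j, addOrderOf (f j) := Finset.dvd_prod_of_mem _ (Finset.mem_univ i)
  calc ((∏ j, addOrderOf (f j)) • f) i = (∏ j, addOrderOf (f j)) • f i := rfl
    _ = 0 := addOrderOf_dvd_iff_nsmul_eq_zero.mp this

lemma dense_torsion_of_torus {T : Type*} [Group T] [TopologicalSpace T]
    (hT : IsTopologicalTorus T) : Dense {t : T | IsOfFinOrder t} := by
  obtain ⟨m, e, he, he'⟩ := hT
  let h : T ≃ₜ Multiplicative (Fin m → AddCircle (1 : ℝ)) := ⟨e.toEquiv, he, he'⟩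
  have h1 : Dense {x : Multiplicative (Fin m → AddCircle (1 : ℝ)) | IsOfFinOrder x} := by
    have h2 : Dense (Set.pi Set.univ fun _ : Fin m =>
        {u : AddCircle (1 : ℝ) | IsOfFinAddOrder u}) :=
      dense_pi Set.univ fun i _ => dense_finAddOrder_addCircle
    refine Dense.mono ?_ (show Dense ((fun x : Fin m → AddCircle (1:ℝ) =>
      (Multiplicative.ofAdd x)) '' (Set.pi Set.univ fun _ =>
        {u : AddCircle (1 : ℝ) | IsOfFinAddOrder u})) from ?_)
    · rintro x ⟨y, hy, rfl⟩
      have : IsOfFinAddOrder y := isOfFinAddOrder_pi fun i => hy i (Set.mem_univ i)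
      simpa [isOfFinOrder_ofAdd_iff] using this
    · exact DenseRange.dense_image (Function.Surjective.denseRange
        (Multiplicative.ofAdd.surjective)) continuous_id' h2
  have h3 : Dense (h.symm '' {x : Multiplicative (Fin m → AddCircle (1 : ℝ)) | IsOfFinOrder x}) :=
    h.symm.surjective.denseRange.dense_image h.symm.continuous h1
  refine h3.mono ?_
  rintro t ⟨x, hx, rfl⟩
  have : h.symm x = e.symm x := rfl
  rw [this]
  exact MonoidHom.isOfFinOrder e.symm.toMonoidHom hx

lemma connectedSpace_of_torus {T : Type*} [Group T] [TopologicalSpace T]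
    (hT : IsTopologicalTorus T) : ConnectedSpace T := by
  obtain ⟨m, e, he, he'⟩ := hT
  let h : T ≃ₜ Multiplicative (Fin m → AddCircle (1 : ℝ)) := ⟨e.toEquiv, he, he'⟩
  haveI : ConnectedSpace (Multiplicative (Fin m → AddCircle (1 : ℝ))) :=
    inferInstanceAs (ConnectedSpace (Fin m → AddCircle (1 : ℝ)))
  exact h.symm.surjective.connectedSpace h.symm.continuous

variable {T Q : Type*} [Group T] [TopologicalSpace T] [Group Q] [TopologicalSpace Q]
  (φ : Q →* MulAut T)

lemma continuous_inl : Continuous (inl : T → T ⋊[φ] Q) :=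
  continuous_induced_rng.2 (continuous_id.prodMk continuous_const)

lemma continuous_proj : Continuous (fun g : T ⋊[φ] Q => (g.left, g.right)) :=
  continuous_induced_dom

lemma continuous_right_proj : Continuous (fun x : T ⋊[φ] Q => x.right) :=
  (continuous_proj φ).snd

end TorusTopAux


open SemidirectProduct in
/-- In `G = T ⋊ Q` with `T` a torus and `Q` finite acting continuously, with `n = |Q|`, the
set `P` of products `⁅q₁,t₁⁆⋯⁅qₙ,tₙ⁆` (where `⁅g,h⁆ = g⁻¹h⁻¹gh`) in which `t₁,…,t_{n-1}` are
torsion elements of `T` is a dense subset of the identity component of the commutator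
subgroup of `G`. -/
theorem torsion_commutator_products_dense_in_identityComponent
    {T : Type*} [Group T] [TopologicalSpace T] [IsTopologicalGroup T]
    (hT : IsTopologicalTorus T)
    {Q : Type*} [Group Q] [Fintype Q] [TopologicalSpace Q] [DiscreteTopology Q]
    (φ : Q →* MulAut T) (hφ : ∀ q : Q, Continuous (φ q))
    (P : Set (T ⋊[φ] Q))
    (hP : P = {x : T ⋊[φ] Q | ∃ (qs : Fin (Fintype.card Q) → Q) (ts : Fin (Fintype.card Q) → T),
      (∀ i : Fin (Fintype.card Q), (i : ℕ) < Fintype.card Q - 1 → IsOfFinOrder (ts i)) ∧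
      x = (List.ofFn fun i =>
        ((inr (qs i) : T ⋊[φ] Q)⁻¹ * (inl (ts i))⁻¹ * inr (qs i) * inl (ts i))).prod}) :
    P ⊆ Subtype.val '' connectedComponent (1 : commutator (T ⋊[φ] Q)) ∧
      Subtype.val '' connectedComponent (1 : commutator (T ⋊[φ] Q)) ⊆ closure P := by
  classical
  obtain ⟨m, e, he, he'⟩ := id hT
  have hcomm : ∀ a b : T, a * b = b * a := fun a b =>
    e.injective (by rw [map_mul, map_mul, mul_comm])
  letI : CommGroup T := { (inferInstance : Group T) with mul_comm := hcomm }
  haveI : ConnectedSpace T := TorusTopAux.connectedSpace_of_torus hT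
  -- the general product form
  have hform : ∀ (qs : Fin (Fintype.card Q) → Q) (us : Fin (Fintype.card Q) → T),
      (List.ofFn fun i =>
        ((inr (qs i) : T ⋊[φ] Q)⁻¹ * (inl (us i))⁻¹ * inr (qs i) * inl (us i))).prod
      = inl (TorusCommAux.Psi φ qs us) := by
    intro qs us
    have hfun : (fun i => ((inr (qs i) : T ⋊[φ] Q)⁻¹ * (inl (us i))⁻¹ * inr (qs i) * inl (us i)))
        = fun i => inl (TorusCommAux.d φ (qs i) (us i)) :=
      funext fun i => TorusCommAux.raw_comm_eq φ (qs i) (us i)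
    rw [hfun, TorusCommAux.inl_Psi_eq]
  have hmem : ∀ (qs : Fin (Fintype.card Q) → Q) (us : Fin (Fintype.card Q) → T),
      (inl (TorusCommAux.Psi φ qs us) : T ⋊[φ] Q) ∈ commutator (T ⋊[φ] Q) := by
    intro qs us
    rw [← hform]
    refine Subgroup.list_prod_mem _ ?_
    intro x hx
    rw [List.mem_ofFn] at hx
    obtain ⟨i, rfl⟩ := hx
    show (inr (qs i) : T ⋊[φ] Q)⁻¹ * (inl (us i))⁻¹ * inr (qs i) * inl (us i)
      ∈ commutator (T ⋊[φ] Q)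
    rw [TorusCommAux.raw_comm_eq']
    exact Subgroup.commutator_mem_commutator (Subgroup.mem_top _) (Subgroup.mem_top _)
  have hPsiCont : ∀ qs : Fin (Fintype.card Q) → Q,
      Continuous fun us : Fin (Fintype.card Q) → T => TorusCommAux.Psi φ qs us := by
    intro qs
    show Continuous fun us : Fin (Fintype.card Q) → T => ∏ i, TorusCommAux.d φ (qs i) (us i)
    refine continuous_finset_prod _ fun i _ => ?_
    show Continuous fun us : Fin (Fintype.card Q) → T => φ (qs i)⁻¹ (us i)⁻¹ * us i
    exact ((hφ (qs i)⁻¹).comp (continuous_apply i).inv).mul (continuous_apply i)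
  constructor
  · -- P ⊆ image of the identity component
    rintro p hp
    rw [hP] at hp
    obtain ⟨qs, ts, hts, rfl⟩ := hp
    set F : (Fin (Fintype.card Q) → T) → ↥(commutator (T ⋊[φ] Q)) :=
      fun us => ⟨inl (TorusCommAux.Psi φ qs us), hmem qs us⟩ with hF
    have hFc : Continuous F :=
      Continuous.subtype_mk ((TorusTopAux.continuous_inl φ).comp (hPsiCont qs)) _
    have hF1 : F (fun _ => 1) = 1 := by
      apply Subtype.ext
      show (inl (TorusCommAux.Psi φ qs fun _ => 1) : T ⋊[φ] Q) = 1
      rw [show (fun _ : Fin (Fintype.card Q) => (1 : T)) = (1 : Fin (Fintype.card Q) → T) from rfl,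
        map_one, map_one]
    have himg : Set.range F ⊆ connectedComponent (1 : ↥(commutator (T ⋊[φ] Q))) := by
      rw [← Set.image_univ]
      refine (isPreconnected_univ.image F hFc.continuousOn).subset_connectedComponent ?_
      exact ⟨fun _ => 1, Set.mem_univ _, hF1⟩
    exact ⟨F ts, himg ⟨ts, rfl⟩, (hform qs ts).symm⟩
  · -- image of the identity component ⊆ closure P
    rintro x ⟨y, hy, rfl⟩
    have hyc : (y : T ⋊[φ] Q) ∈ commutator (T ⋊[φ] Q) := y.2
    have hr : (y : T ⋊[φ] Q).right = 1 := by
      set ρ : ↥(commutator (T ⋊[φ] Q)) → Q := fun z => (z : T ⋊[φ] Q).right with hρdef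
      have hρ : Continuous ρ :=
        (TorusTopAux.continuous_right_proj φ).comp continuous_subtype_val
      have himg : ρ '' connectedComponent (1 : ↥(commutator (T ⋊[φ] Q)))
          ⊆ connectedComponent (ρ 1) :=
        (isPreconnected_connectedComponent.image ρ hρ.continuousOn).subset_connectedComponent
          ⟨1, mem_connectedComponent, rfl⟩
      have hsing : connectedComponent (ρ 1) = {ρ 1} :=
        totallyDisconnectedSpace_iff_connectedComponent_singleton.mp inferInstance _
      have : ρ y ∈ ({ρ 1} : Set Q) := hsing ▸ himg ⟨y, hy, rfl⟩
      simpa [hρdef] using this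
    have hN : (y : T ⋊[φ] Q) ∈ TorusCommAux.NN φ :=
      TorusCommAux.mem_NN_of_right_one φ hyc hr
    have hS := TorusCommAux.NN_le_Smax φ hN
    rw [TorusCommAux.mem_Smax_iff] at hS
    obtain ⟨ts, hts⟩ := hS
    set qs : Fin (Fintype.card Q) → Q := fun i => (Fintype.equivFin Q).symm i with hqs
    set u' : (Fin (Fintype.card Q) → T) → (Fin (Fintype.card Q) → T) :=
      fun us i => if (i : ℕ) < Fintype.card Q - 1 then us i else ts i with hu'
    have hu'c : Continuous u' := by
      refine continuous_pi fun i => ?_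
      by_cases h : (i : ℕ) < Fintype.card Q - 1
      · simpa [hu', h] using (continuous_apply i)
      · simpa [hu', h] using (continuous_const : Continuous fun _ : Fin (Fintype.card Q) → T => ts i)
    set F' : (Fin (Fintype.card Q) → T) → T ⋊[φ] Q :=
      fun us => inl (TorusCommAux.Psi φ qs (u' us)) with hF'
    have hF'c : Continuous F' :=
      (TorusTopAux.continuous_inl φ).comp ((hPsiCont qs).comp hu'c)
    have hval : (y : T ⋊[φ] Q) = F' ts := by
      rw [hts, hF']
      congr 1
      show TorusCommAux.Psi φ qs ts = TorusCommAux.Psi φ qs (u' ts)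
      congr 1
      funext i
      by_cases h : (i : ℕ) < Fintype.card Q - 1 <;> simp [hu', h]
    have hd : Dense (Set.pi Set.univ fun _ : Fin (Fintype.card Q) =>
        {t : T | IsOfFinOrder t}) :=
      dense_pi Set.univ fun i _ => TorusTopAux.dense_torsion_of_torus hT
    have hkey : F' ts ∈ closure (F' '' (Set.pi Set.univ fun _ : Fin (Fintype.card Q) =>
        {t : T | IsOfFinOrder t})) :=
      image_closure_subset_closure_image hF'c ⟨ts, hd ts, rfl⟩
    rw [hval]
    refine closure_mono ?_ hkey
    rintro z ⟨us, hus, rfl⟩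
    rw [hP]
    refine ⟨qs, u' us, ?_, ?_⟩
    · intro i hi
      have : u' us i = us i := by simp [hu', hi]
      rw [this]
      exact hus i (Set.mem_univ i)
    · rw [hform qs (u' us)]
end

section
/- Let G be a compact Lie group such that the quotient homomorphism G → π₀(G) admits a group-theoretic section and π₀(G) is abelian. Then the commutator subgroup [G,G] is connected; in particular [G,G] is contained in the identity component G₀ of G. -/
open scoped Manifold Pointwise commutatorElement

/-- The identity component of a topological group is a normal subgroup. -/
instance connectedComponentOfOne_normal {G : Type*} [Group G] [TopologicalSpace G]
    [IsTopologicalGroup G] : (Subgroup.connectedComponentOfOne G).Normal := by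
  constructor
  intro n hn g
  have hc : Continuous fun x : G => g * x * g⁻¹ := by continuity
  have h := hc.image_connectedComponent_subset (1 : G)
  simp only [mul_one, mul_inv_cancel] at h
  exact h ⟨n, hn, rfl⟩

private lemma aux_mul_preconnected {G : Type*} [Group G] [TopologicalSpace G]
    [IsTopologicalGroup G] {s t : Set G} (hs : IsPreconnected s) (ht : IsPreconnected t) :
    IsPreconnected (s * t) := by
  rw [← Set.image_mul_prod]
  exact (hs.prod ht).image _ (Continuous.continuousOn (by fun_prop))

/-- Let `G` be a compact Lie group such that the quotient map `G → π₀(G) = G/G₀` admits a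
group-theoretic section and `π₀(G)` is abelian.  Then the commutator subgroup `[G,G]` is
connected; in particular it is contained in the identity component `G₀`. -/
theorem commutator_connected_of_section_of_abelian_pi0
    {E : Type*} [NormedAddCommGroup E] [NormedSpace ℝ E] [FiniteDimensional ℝ E]
    {G : Type*} [Group G] [TopologicalSpace G] [ChartedSpace E G]
    [LieGroup 𝓘(ℝ, E) (⊤ : ℕ∞) G] [CompactSpace G] [IsTopologicalGroup G]
    (s : (G ⧸ Subgroup.connectedComponentOfOne G) →* G)
    (hs : (QuotientGroup.mk' (Subgroup.connectedComponentOfOne G)).comp s = MonoidHom.id _)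
    (habel : ∀ a b : G ⧸ Subgroup.connectedComponentOfOne G, a * b = b * a) :
    IsConnected ((commutator G : Set G)) ∧
      (commutator G : Set G) ⊆ connectedComponent (1 : G) := by
  set H := Subgroup.connectedComponentOfOne G with hH
  -- every g lies in the connected component of s (mk g)
  have key : ∀ g : G, g ∈ connectedComponent (s (QuotientGroup.mk g)) := by
    intro g
    have h1 : (QuotientGroup.mk (s (QuotientGroup.mk g)) : G ⧸ H) = QuotientGroup.mk g := by
      have := congrArg (fun f => f (QuotientGroup.mk g : G ⧸ H)) (congrArg DFunLike.coe hs)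
      exact this
    have h2 : (s (QuotientGroup.mk g))⁻¹ * g ∈ connectedComponent (1 : G) := by
      have := (QuotientGroup.eq (s := H)).mp h1
      exact this
    have hC : IsPreconnected ((fun x => s (QuotientGroup.mk g) * x) '' connectedComponent (1 : G)) :=
      isPreconnected_connectedComponent.image _ (Continuous.continuousOn (by fun_prop))
    have hsub : ((fun x => s (QuotientGroup.mk g) * x) '' connectedComponent (1 : G)) ⊆
        connectedComponent (s (QuotientGroup.mk g)) := by
      apply hC.subset_connectedComponent
      exact ⟨1, mem_connectedComponent, mul_one _⟩
    exact hsub ⟨_, h2, by group⟩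
  -- commutators of section elements are trivial
  have hsec : ∀ a b : G ⧸ H, ⁅s a, s b⁆ = 1 := by
    intro a b
    rw [← map_commutatorElement, commutatorElement_def, habel a b]
    simp [← commutatorElement_def]
  -- the commutator set is connected and contains 1
  have hT1 : (1 : G) ∈ commutatorSet G := one_mem_commutatorSet G
  have hTconn : IsPreconnected (commutatorSet G) := by
    have heq : commutatorSet G = ⋃ p : (G ⧸ H) × (G ⧸ H),
        (fun x : G × G => ⁅x.1, x.2⁆) ''
          (connectedComponent (s p.1) ×ˢ connectedComponent (s p.2)) := by
      ext x
      constructor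
      · rintro ⟨g, h, rfl⟩
        exact Set.mem_iUnion.mpr ⟨(QuotientGroup.mk g, QuotientGroup.mk h),
          ⟨(g, h), ⟨key g, key h⟩, rfl⟩⟩
      · rintro ⟨_, ⟨p, rfl⟩, ⟨g, h⟩, _, rfl⟩
        exact ⟨g, h, rfl⟩
    rw [heq]
    apply isPreconnected_iUnion
    · refine ⟨1, Set.mem_iInter.mpr fun p => ?_⟩
      exact ⟨(s p.1, s p.2), ⟨mem_connectedComponent, mem_connectedComponent⟩, hsec p.1 p.2⟩
    · intro p
      have hcont : Continuous fun x : G × G => ⁅x.1, x.2⁆ := by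
        simp only [commutatorElement_def]; fun_prop
      exact ((isPreconnected_connectedComponent.prod
        isPreconnected_connectedComponent).image _ hcont.continuousOn)
  -- the commutator subgroup as a union of powers of the commutator set
  have hTsymm : (commutatorSet G)⁻¹ = commutatorSet G := by
    ext x
    constructor
    · rintro ⟨g, h, hx⟩
      exact ⟨h, g, by rw [← commutatorElement_inv, hx, inv_inv]⟩
    · rintro ⟨g, h, rfl⟩
      exact ⟨h, g, (commutatorElement_inv g h).symm ▸ rfl⟩
  have hpow : ∀ n : ℕ, commutatorSet G ^ (n + 1) ⊆ (commutator G : Set G) := by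
    intro n
    induction n with
    | zero =>
      intro x hx
      rw [commutator_eq_closure]
      exact Subgroup.subset_closure (by simpa using hx)
    | succ n ih =>
      rw [pow_succ]
      rintro x ⟨a, ha, b, hb, rfl⟩
      have hb' : b ∈ commutator G := by
        rw [commutator_eq_closure]; exact Subgroup.subset_closure hb
      exact mul_mem (ih ha) hb'
  have hunion : (commutator G : Set G) = ⋃ n : ℕ, commutatorSet G ^ (n + 1) := by
    apply Set.Subset.antisymm
    · intro x hx
      rw [commutator_eq_closure] at hx
      induction hx using Subgroup.closure_induction with
      | mem y hy => exact Set.mem_iUnion.mpr ⟨0, by simpa using hy⟩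
      | one => exact Set.mem_iUnion.mpr ⟨0, by simpa using hT1⟩
      | mul y z _ _ hy hz =>
        obtain ⟨m, hm⟩ := Set.mem_iUnion.mp hy
        obtain ⟨n, hn⟩ := Set.mem_iUnion.mp hz
        refine Set.mem_iUnion.mpr ⟨m + n + 1, ?_⟩
        have : commutatorSet G ^ (m + 1) * commutatorSet G ^ (n + 1)
            = commutatorSet G ^ (m + n + 1 + 1) := by
          rw [← pow_add]; ring_nf
        rw [← this]
        exact Set.mul_mem_mul hm hn
      | inv y _ hy =>
        obtain ⟨n, hn⟩ := Set.mem_iUnion.mp hy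
        refine Set.mem_iUnion.mpr ⟨n, ?_⟩
        have : (commutatorSet G ^ (n + 1))⁻¹ = commutatorSet G ^ (n + 1) := by
          rw [← inv_pow, hTsymm]
        rw [← this]
        exact Set.inv_mem_inv.mpr hn
    · exact Set.iUnion_subset hpow
  have hconn : IsPreconnected ((commutator G : Set G)) := by
    rw [hunion]
    apply isPreconnected_iUnion
    · exact ⟨1, Set.mem_iInter.mpr fun n => by simpa using Set.pow_mem_pow hT1 (n := n + 1)⟩
    · intro n
      induction n with
      | zero => simpa using hTconn
      | succ n ih =>
        rw [pow_succ]
        exact aux_mul_preconnected ih hTconn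
  have h1mem : (1 : G) ∈ (commutator G : Set G) := (commutator G).one_mem
  exact ⟨⟨⟨1, h1mem⟩, hconn⟩, hconn.subset_connectedComponent h1mem⟩
end
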